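/- Let κ = 1 + √2. The point (θ0, θ1, θ2, θ3, ζ) with ζ = π/4, θ0 = arctan(1/(1 + √2·κ)), θ1 = −θ0, θ2 = arctan(1/(1 − √2·κ)), and θ3 = −θ2 is an equilibrium of the minimal frequency-spiral model with parameter ω = 0. -/

import Mathlib

open Real

/-- An equilibrium of the minimal frequency-spiral model with parameter `ω` and
`κ = 1 + √2`: all five right-hand sides of the ODE system vanish. -/
def IsMinimalSpiralEquilibrium (ω θ0 θ1 θ2 θ3 ζ : ℝ) : Prop :=
  Real.sin (ζ - θ0) - (1 + Real.sqrt 2) * Real.sin θ0 = 0 ∧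
  Real.sin (ζ - θ1 - Real.pi / 2) - (1 + Real.sqrt 2) * Real.sin θ1 = 0 ∧
  Real.sin (ζ - θ2 - Real.pi) - (1 + Real.sqrt 2) * Real.sin θ2 = 0 ∧
  Real.sin (ζ - θ3 - 3 * Real.pi / 2) - (1 + Real.sqrt 2) * Real.sin θ3 = 0 ∧
  ω - Real.sin (ζ - θ0) - Real.sin (ζ - θ1 - Real.pi / 2)
    - Real.sin (ζ - θ2 - Real.pi) - Real.sin (ζ - θ3 - 3 * Real.pi / 2) = 0

/-- With `κ = 1 + √2`, the point with `ζ = π/4`, `θ0 = arctan(1/(1 + √2·κ)) = −θ1`, and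
`θ2 = arctan(1/(1 − √2·κ)) = −θ3` is an equilibrium of the minimal frequency-spiral
model with parameter `ω = 0`. -/
theorem minimalSpiral_equilibrium_at_omega_zero :
    IsMinimalSpiralEquilibrium 0
      (Real.arctan (1 / (1 + Real.sqrt 2 * (1 + Real.sqrt 2))))
      (-Real.arctan (1 / (1 + Real.sqrt 2 * (1 + Real.sqrt 2))))
      (Real.arctan (1 / (1 - Real.sqrt 2 * (1 + Real.sqrt 2))))
      (-Real.arctan (1 / (1 - Real.sqrt 2 * (1 + Real.sqrt 2))))
      (Real.pi / 4) := by
  have h2 : Real.sqrt 2 ^ 2 = 2 := Real.sq_sqrt (by norm_num)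
  have hr1 : (1:ℝ) ≤ Real.sqrt 2 := by nlinarith [Real.sqrt_nonneg 2]
  have h3 : Real.sqrt 2 ^ 3 = 2 * Real.sqrt 2 := by
    rw [show (Real.sqrt 2 ^ 3 = Real.sqrt 2 ^ 2 * Real.sqrt 2) from by ring, h2]
  have h4 : Real.sqrt 2 ^ 4 = 4 := by
    rw [show (Real.sqrt 2 ^ 4 = (Real.sqrt 2 ^ 2) ^ 2) from by ring, h2]; norm_num
  have h5 : Real.sqrt 2 ^ 5 = 4 * Real.sqrt 2 := by
    rw [show (Real.sqrt 2 ^ 5 = (Real.sqrt 2 ^ 2) ^ 2 * Real.sqrt 2) from by ring, h2]; norm_num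
  have hbx : (1 + Real.sqrt 2 * (1 + Real.sqrt 2)) ≠ 0 := by nlinarith
  have hby : (1 - Real.sqrt 2 * (1 + Real.sqrt 2)) ≠ 0 := by nlinarith
  set x : ℝ := 1 / (1 + Real.sqrt 2 * (1 + Real.sqrt 2)) with hx
  set y : ℝ := 1 / (1 - Real.sqrt 2 * (1 + Real.sqrt 2)) with hy
  have hsx : Real.sqrt (1 + x ^ 2) ≠ 0 := by positivity
  have hsy : Real.sqrt (1 + y ^ 2) ≠ 0 := by positivity
  have e2 : ∀ u : ℝ, Real.sin (u - Real.pi/2) = -Real.cos u := Real.sin_sub_pi_div_two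
  have e3 : ∀ u : ℝ, Real.sin (u - Real.pi) = -Real.sin u := Real.sin_sub_pi
  have e4 : ∀ u : ℝ, Real.sin (u - 3*Real.pi/2) = Real.cos u := by
    intro u
    have : u - 3*Real.pi/2 = (u - Real.pi) - Real.pi/2 := by ring
    rw [this, Real.sin_sub_pi_div_two, Real.cos_sub_pi, neg_neg]
  refine ⟨?_, ?_, ?_, ?_, ?_⟩
  · rw [Real.sin_sub, Real.sin_pi_div_four, Real.cos_pi_div_four,
      Real.sin_arctan, Real.cos_arctan]
    field_simp [hx]
    ring_nf
    rw [hx]; field_simp; ring_nf; simp only [h2, h3, h4, h5]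
    ring
  · rw [sub_neg_eq_add, e2, Real.cos_add, Real.sin_pi_div_four, Real.cos_pi_div_four,
      Real.sin_arctan, Real.cos_arctan, Real.sin_neg, Real.sin_arctan]
    field_simp [hx]
    ring_nf
    rw [hx]; field_simp; ring_nf; simp only [h2, h3, h4, h5]
    ring
  · rw [e3, Real.sin_sub, Real.sin_pi_div_four, Real.cos_pi_div_four,
      Real.sin_arctan, Real.cos_arctan]
    field_simp [hy]
    ring_nf
    rw [hy]; field_simp; ring_nf; simp only [h2, h3, h4, h5]
    ring
  · rw [sub_neg_eq_add, e4, Real.cos_add, Real.sin_pi_div_four, Real.cos_pi_div_four,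
      Real.sin_arctan, Real.cos_arctan, Real.sin_neg, Real.sin_arctan]
    field_simp [hy]
    ring_nf
    rw [hy]; field_simp; ring_nf; simp only [h2, h3, h4, h5]
    ring
  · rw [sub_neg_eq_add, sub_neg_eq_add, e2, e3, e4, Real.sin_sub, Real.cos_add,
      Real.sin_sub, Real.cos_add, Real.sin_pi_div_four, Real.cos_pi_div_four,
      Real.sin_arctan, Real.cos_arctan]
    ring
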